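/- Block matrix-vector recursion correctness: let A ∈ 𝒞^{N,M} with block ratio vectors r^L, r^U, and x ∈ ℝ^{NM} partitioned into blocks x_1,…,x_M ∈ ℝ^N. Define p_1 = A_{1,1} x_1, p_k = r^L_{k-1} ⊙ p_{k-1} + A_{k,k} x_k for k = 2,…,M, and q_M = 0, q_{k-1} = r^U_{k-1} ⊙ (q_k + A_{k,k} x_k) for k = M,…,2. Then A x = p + q, where p and q are the concatenations of the p_k and q_k. -/
import Mathlib


open Matrix Finset

/-- `A` is an L-CoLT matrix with ratio vector `r` (0-indexed; `r` has `N-1` meaningful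
nonzero entries): `A (i+1) j = r i * A i j` for `j ≤ i`, and `A i j = 0` for `i < j`. -/
def IsLCoLT {N : ℕ} (A : Matrix (Fin N) (Fin N) ℝ) (r : ℕ → ℝ) : Prop :=
  (∀ k, k + 1 < N → r k ≠ 0) ∧
  (∀ i i' j : Fin N, (i' : ℕ) = (i : ℕ) + 1 → (j : ℕ) ≤ (i : ℕ) → A i' j = r i * A i j) ∧
  (∀ i j : Fin N, (i : ℕ) < (j : ℕ) → A i j = 0)

/-- `A` is a U-CoLT matrix with ratio vector `r'` (0-indexed; `r'` has `N-2` meaningful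
nonzero entries): `A (i-1) j = r' (i-1) * A i j` for `i < j`, and `A i j = 0` for `j ≤ i`. -/
def IsUCoLT {N : ℕ} (A : Matrix (Fin N) (Fin N) ℝ) (r' : ℕ → ℝ) : Prop :=
  (∀ k, k + 2 < N → r' k ≠ 0) ∧
  (∀ i i' j : Fin N, (i : ℕ) = (i' : ℕ) + 1 → (i : ℕ) < (j : ℕ) → A i' j = r' i' * A i j) ∧
  (∀ i j : Fin N, (j : ℕ) ≤ (i : ℕ) → A i j = 0)

/-- The set 𝒞^N: sums of an L-CoLT and a U-CoLT matrix. -/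
def InCN {N : ℕ} (M : Matrix (Fin N) (Fin N) ℝ) : Prop :=
  ∃ A B : Matrix (Fin N) (Fin N) ℝ,
    (∃ r, IsLCoLT A r) ∧ (∃ r', IsUCoLT B r') ∧ M = A + B

/-- The block set 𝒞^{N,M}: an MN×MN block matrix (indexed by Fin M × Fin N, first
component the block index) whose diagonal blocks lie in 𝒞^N and whose blocks satisfy
A_{i+1,j} = diag(r^L_i) A_{i,j} for j ≤ i and A_{i-1,j} = diag(r^U_{i-1}) A_{i,j} for
i ≤ j, with the block ratio vectors r^L, r^U ∈ (ℝ\{0})^{(M-1)N}. -/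
def IsBlockCoLT {N M : ℕ} (A : Matrix (Fin M × Fin N) (Fin M × Fin N) ℝ)
    (rL rU : ℕ → Fin N → ℝ) : Prop :=
  (∀ k : Fin M, InCN ((fun a b => A (k, a) (k, b)) : Matrix (Fin N) (Fin N) ℝ)) ∧
  (∀ k, k + 1 < M → ∀ a, rL k a ≠ 0) ∧
  (∀ k, k + 1 < M → ∀ a, rU k a ≠ 0) ∧
  (∀ i i' j : Fin M, (i' : ℕ) = (i : ℕ) + 1 → (j : ℕ) ≤ (i : ℕ) → ∀ a b : Fin N,
    A (i', a) (j, b) = rL (i : ℕ) a * A (i, a) (j, b)) ∧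
  (∀ i i' j : Fin M, (i : ℕ) = (i' : ℕ) + 1 → (i : ℕ) ≤ (j : ℕ) → ∀ a b : Fin N,
    A (i', a) (j, b) = rU (i' : ℕ) a * A (i, a) (j, b))

/-- The k-th diagonal block of A (the zero matrix if k ≥ M). -/
def dblk {N M : ℕ} (A : Matrix (Fin M × Fin N) (Fin M × Fin N) ℝ) (k : ℕ) :
    Matrix (Fin N) (Fin N) ℝ :=
  if h : k < M then (fun a b => A (⟨k, h⟩, a) (⟨k, h⟩, b)) else 0

/-- The k-th block of a vector x ∈ ℝ^{MN} (zero if k ≥ M). -/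
def xblk {N M : ℕ} (x : Fin M × Fin N → ℝ) (k : ℕ) : Fin N → ℝ :=
  if h : k < M then (fun a => x (⟨k, h⟩, a)) else 0

/-- The forward block recursion: p_0 = A_{0,0} x_0, p_{k+1} = r^L_k ⊙ p_k + A_{k+1,k+1} x_{k+1}. -/
def pBlk {N M : ℕ} (A : Matrix (Fin M × Fin N) (Fin M × Fin N) ℝ)
    (x : Fin M × Fin N → ℝ) (rL : ℕ → Fin N → ℝ) : ℕ → Fin N → ℝ
  | 0 => (dblk A 0).mulVec (xblk x 0)
  | k + 1 => fun a =>
      rL k a * pBlk A x rL k a + (dblk A (k + 1)).mulVec (xblk x (k + 1)) a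

/-- The backward block recursion, indexed by the distance d from the last block row:
qBlk d = q_{(M-1)-d}, with q_{M-1} = 0 and q_{k-1} = r^U_{k-1} ⊙ (q_k + A_{k,k} x_k). -/
def qBlk {N M : ℕ} (A : Matrix (Fin M × Fin N) (Fin M × Fin N) ℝ)
    (x : Fin M × Fin N → ℝ) (rU : ℕ → Fin N → ℝ) : ℕ → Fin N → ℝ
  | 0 => 0
  | d + 1 => fun a =>
      rU (M - 1 - (d + 1)) a *
        (qBlk A x rU d a + (dblk A (M - 1 - d)).mulVec (xblk x (M - 1 - d)) a)

lemma pBlk_eq {N M : ℕ} (A : Matrix (Fin M × Fin N) (Fin M × Fin N) ℝ)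
    (rL rU : ℕ → Fin N → ℝ) (x : Fin M × Fin N → ℝ) (hA : IsBlockCoLT A rL rU) :
    ∀ k (hk : k < M) (a : Fin N), pBlk A x rL k a =
      ∑ j : Fin M, ∑ b : Fin N,
        if (j : ℕ) ≤ k then A (⟨k, hk⟩, a) (j, b) * x (j, b) else 0 := by
  intro k
  induction k with
  | zero =>
    intro hk a
    show (dblk A 0).mulVec (xblk x 0) a = _
    have hsplit : ∀ j : Fin M,
        (∑ b : Fin N, if (j : ℕ) ≤ 0 then A (⟨0, hk⟩, a) (j, b) * x (j, b) else 0)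
          = if j = ⟨0, hk⟩ then ∑ b : Fin N, A (⟨0, hk⟩, a) (j, b) * x (j, b) else 0 := by
      intro j
      by_cases h : (j : ℕ) ≤ 0
      · rw [if_pos (Fin.ext (Nat.le_zero.mp h))]
        exact Finset.sum_congr rfl fun b _ => if_pos h
      · rw [if_neg (fun he => h (by rw [he]))]
        exact Finset.sum_eq_zero fun b _ => if_neg h
    rw [Finset.sum_congr rfl fun j _ => hsplit j, Finset.sum_ite_eq' Finset.univ]
    simp [dblk, xblk, hk, Matrix.mulVec, dotProduct]
  | succ k ih =>
    intro hk a
    have hk' : k < M := Nat.lt_of_succ_lt hk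
    show rL k a * pBlk A x rL k a + (dblk A (k + 1)).mulVec (xblk x (k + 1)) a = _
    have hL : rL k a * pBlk A x rL k a
        = ∑ j : Fin M, ∑ b : Fin N,
            if (j : ℕ) ≤ k then A (⟨k + 1, hk⟩, a) (j, b) * x (j, b) else 0 := by
      rw [ih hk', Finset.mul_sum]
      refine Finset.sum_congr rfl fun j _ => ?_
      rw [Finset.mul_sum]
      refine Finset.sum_congr rfl fun b _ => ?_
      by_cases h : (j : ℕ) ≤ k
      · rw [if_pos h, if_pos h, hA.2.2.2.1 ⟨k, hk'⟩ ⟨k + 1, hk⟩ j rfl h a b]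
        ring
      · rw [if_neg h, if_neg h, mul_zero]
    have hD : (dblk A (k + 1)).mulVec (xblk x (k + 1)) a
        = ∑ b : Fin N, A (⟨k + 1, hk⟩, a) (⟨k + 1, hk⟩, b) * x (⟨k + 1, hk⟩, b) := by
      simp [dblk, xblk, hk, Matrix.mulVec, dotProduct]
    rw [hL, hD]
    have hsplit : ∀ j : Fin M,
        (∑ b : Fin N, if (j : ℕ) ≤ k + 1 then A (⟨k + 1, hk⟩, a) (j, b) * x (j, b) else 0)
          = (∑ b : Fin N, if (j : ℕ) ≤ k then A (⟨k + 1, hk⟩, a) (j, b) * x (j, b) else 0)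
            + (if j = ⟨k + 1, hk⟩ then
                ∑ b : Fin N, A (⟨k + 1, hk⟩, a) (j, b) * x (j, b) else 0) := by
      intro j
      by_cases hje : j = ⟨k + 1, hk⟩
      · subst hje
        simp [show ¬(k + 1 ≤ k) from by omega]
      · have hne : (j : ℕ) ≠ k + 1 := fun h => hje (Fin.ext h)
        have hj' : ((j : ℕ) ≤ k + 1) ↔ ((j : ℕ) ≤ k) := by omega
        simp [hje, hj']
    rw [Finset.sum_congr rfl fun j _ => hsplit j, Finset.sum_add_distrib,
      Finset.sum_ite_eq' Finset.univ]
    simp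

lemma qBlk_eq {N M : ℕ} (A : Matrix (Fin M × Fin N) (Fin M × Fin N) ℝ)
    (rL rU : ℕ → Fin N → ℝ) (x : Fin M × Fin N → ℝ) (hA : IsBlockCoLT A rL rU) :
    ∀ d, d < M → ∀ k, k = M - 1 - d → ∀ (hk : k < M) (a : Fin N), qBlk A x rU d a =
      ∑ j : Fin M, ∑ b : Fin N,
        if k < (j : ℕ) then A (⟨k, hk⟩, a) (j, b) * x (j, b) else 0 := by
  intro d
  induction d with
  | zero =>
    intro hd k hke hk a
    show (0 : ℝ) = _
    symm
    refine Finset.sum_eq_zero fun j _ => Finset.sum_eq_zero fun b _ => if_neg ?_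
    have := j.isLt
    omega
  | succ d ih =>
    intro hd k hke hk a
    have hd' : d < M := Nat.lt_of_succ_lt hd
    have hk1 : k + 1 < M := by omega
    have e2 : M - 1 - d = k + 1 := by omega
    show rU (M - 1 - (d + 1)) a *
        (qBlk A x rU d a + (dblk A (M - 1 - d)).mulVec (xblk x (M - 1 - d)) a) = _
    rw [← hke, e2, ih hd' (k + 1) (by omega) hk1 a]
    have hD : (dblk A (k + 1)).mulVec (xblk x (k + 1)) a
        = ∑ b : Fin N, A (⟨k + 1, hk1⟩, a) (⟨k + 1, hk1⟩, b) * x (⟨k + 1, hk1⟩, b) := by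
      simp [dblk, xblk, hk1, Matrix.mulVec, dotProduct]
    rw [hD]
    have hsplit : ∀ j : Fin M,
        (∑ b : Fin N, if k + 1 < (j : ℕ) then A (⟨k + 1, hk1⟩, a) (j, b) * x (j, b) else 0)
          + (if j = ⟨k + 1, hk1⟩ then
              ∑ b : Fin N, A (⟨k + 1, hk1⟩, a) (j, b) * x (j, b) else 0)
          = ∑ b : Fin N, if k + 1 ≤ (j : ℕ) then A (⟨k + 1, hk1⟩, a) (j, b) * x (j, b) else 0 := by
      intro j
      by_cases hje : j = ⟨k + 1, hk1⟩
      · subst hje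
        simp [show ¬(k + 1 < k + 1) from by omega]
      · have hne : (j : ℕ) ≠ k + 1 := fun h => hje (Fin.ext h)
        have hj' : (k + 1 < (j : ℕ)) ↔ (k + 1 ≤ (j : ℕ)) := by omega
        simp [hje, hj']
    have hmerge : qBlk A x rU d a
          + ∑ b : Fin N, A (⟨k + 1, hk1⟩, a) (⟨k + 1, hk1⟩, b) * x (⟨k + 1, hk1⟩, b)
        = ∑ j : Fin M, ∑ b : Fin N,
            if k + 1 ≤ (j : ℕ) then A (⟨k + 1, hk1⟩, a) (j, b) * x (j, b) else 0 := by
      rw [ih hd' (k + 1) (by omega) hk1 a,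
        ← Finset.sum_congr rfl fun j _ => hsplit j, Finset.sum_add_distrib,
        Finset.sum_ite_eq' Finset.univ]
      simp
    rw [← ih hd' (k + 1) (by omega) hk1 a, hmerge, Finset.mul_sum]
    refine Finset.sum_congr rfl fun j _ => ?_
    rw [Finset.mul_sum]
    refine Finset.sum_congr rfl fun b _ => ?_
    by_cases h : k + 1 ≤ (j : ℕ)
    · rw [if_pos h, if_pos (by omega : k < (j : ℕ)),
        hA.2.2.2.2 ⟨k + 1, hk1⟩ ⟨k, hk⟩ j rfl h a b]
      ring
    · rw [if_neg h, if_neg (by omega : ¬ k < (j : ℕ)), mul_zero]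

/-- the block recursions compute the matrix-vector product: A x = p + q. -/
theorem stmt17 {N M : ℕ} (A : Matrix (Fin M × Fin N) (Fin M × Fin N) ℝ)
    (rL rU : ℕ → Fin N → ℝ) (x : Fin M × Fin N → ℝ)
    (hA : IsBlockCoLT A rL rU) :
    A.mulVec x = fun p =>
      pBlk A x rL (p.1 : ℕ) p.2 + qBlk A x rU (M - 1 - (p.1 : ℕ)) p.2 := by
  funext p
  obtain ⟨i, a⟩ := p
  have hi : (i : ℕ) < M := i.isLt
  have hq := qBlk_eq A rL rU x hA (M - 1 - (i : ℕ)) (by omega) (i : ℕ) (by omega) hi a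
  have hp := pBlk_eq A rL rU x hA (i : ℕ) hi a
  show A.mulVec x (i, a) = pBlk A x rL (i : ℕ) a + qBlk A x rU (M - 1 - (i : ℕ)) a
  rw [hp, hq]
  have hmk : (⟨(i : ℕ), hi⟩ : Fin M) = i := rfl
  rw [hmk]
  rw [Matrix.mulVec, dotProduct, Fintype.sum_prod_type, ← Finset.sum_add_distrib]
  refine Finset.sum_congr rfl fun j _ => ?_
  rw [← Finset.sum_add_distrib]
  refine Finset.sum_congr rfl fun b _ => ?_
  by_cases h : (j : ℕ) ≤ (i : ℕ)
  · rw [if_pos h, if_neg (by omega), add_zero]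
  · rw [if_neg h, if_pos (by omega), zero_add]
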